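/- Let p be a prime and Q a finite group, and let W = Q ≀ ℤ/p = (Fin p → Q) ⋊ ℤ/p with the cyclic shift action. Then the number of elements of order p in W equals (d + 1)^p − 1 + (p − 1)·|Q|^{p−1}, where d is the number of elements of order p in Q. -/

import Mathlib

/-- The homomorphism `ℤ/n → G` sending `1` to an element `g` with `g ^ n = 1`. -/
noncomputable def zmodHom {G : Type*} [Group G] (n : ℕ) (g : G) (h : g ^ n = 1) :
    Multiplicative (ZMod n) →* G :=
  AddMonoidHom.toMultiplicativeLeft
    (ZMod.lift n ⟨zmultiplesHom (Additive G) (Additive.ofMul g), by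
      show ((n : ℤ) • Additive.ofMul g) = 0
      rw [← ofMul_zpow, zpow_natCast, h, ofMul_one]⟩)

/-- The automorphism of `ι → Q` induced by a permutation of the index set `ι`. -/
def permMulAut {ι : Type*} {Q : Type*} [Group Q] (σ : Equiv.Perm ι) : MulAut (ι → Q) where
  toFun f := f ∘ σ.symm
  invFun f := f ∘ σ
  left_inv f := by ext i; simp
  right_inv f := by ext i; simp
  map_mul' f g := rfl

/-- Permutations of the index set act on `ι → Q` by automorphisms. -/
def permHom (ι : Type*) (Q : Type*) [Group Q] : Equiv.Perm ι →* MulAut (ι → Q) where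
  toFun := permMulAut
  map_one' := by ext f i; rfl
  map_mul' σ τ := by ext f i; rfl

section

open Fin.NatCast Fin.CommRing

lemma finRotate_pow_self : ∀ p : ℕ, finRotate p ^ p = 1 := by
  intro p
  match p with
  | 0 => exact Subsingleton.elim _ _
  | (n+1) =>
    have key : ∀ k : ℕ, ∀ i : Fin (n+1), (finRotate (n+1) ^ k) i = i + (k : Fin (n+1)) := by
      intro k
      induction k with
      | zero => intro i; simp
      | succ m ih =>
        intro i
        rw [pow_succ, Equiv.Perm.mul_apply, ih, finRotate_succ_apply]
        push_cast
        ring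
    ext i
    rw [key (n+1) i]
    simp

end

/-- The action of `ℤ/p` on `Fin p → Q` by cyclically shifting the coordinates. -/
noncomputable def rotHom (p : ℕ) (Q : Type*) [Group Q] :
    Multiplicative (ZMod p) →* MulAut (Fin p → Q) :=
  zmodHom p (permHom (Fin p) Q (finRotate p))
    (by rw [← map_pow, finRotate_pow_self, map_one])

/-- The wreath product `Q ≀ ℤ/p = (Fin p → Q) ⋊ ℤ/p`, where `ℤ/p` acts by cyclically
shifting the coordinates. -/
noncomputable def WreathCyc (p : ℕ) (Q : Type*) [Group Q] :=
  (Fin p → Q) ⋊[rotHom p Q] Multiplicative (ZMod p)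

noncomputable instance (p : ℕ) (Q : Type*) [Group Q] : Group (WreathCyc p Q) :=
  inferInstanceAs (Group ((Fin p → Q) ⋊[rotHom p Q] Multiplicative (ZMod p)))

/-- The base subgroup `Q^p` of the wreath product `Q ≀ ℤ/p`. -/
noncomputable def wreathBase (p : ℕ) (Q : Type*) [Group Q] : Subgroup (WreathCyc p Q) :=
  (SemidirectProduct.inl : (Fin p → Q) →* (Fin p → Q) ⋊[rotHom p Q] Multiplicative (ZMod p)).range

/-- The image in `Q ≀ ℤ/p` of the generator `1` of `ℤ/p`. -/
noncomputable def wreathGen (p : ℕ) (Q : Type*) [Group Q] : WreathCyc p Q :=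
  (SemidirectProduct.inr : Multiplicative (ZMod p) →* (Fin p → Q) ⋊[rotHom p Q] Multiplicative (ZMod p))
    (Multiplicative.ofAdd (1 : ZMod p))

open Fin.NatCast Fin.CommRing



theorem sd_pow {N G : Type*} [Group N] [Group G] (φ : G →* MulAut N) (n : N) (g : G) (m : ℕ) :
    ((⟨n, g⟩ : N ⋊[φ] G) ^ m) = ⟨(List.ofFn fun j : Fin m => φ (g ^ (j : ℕ)) n).prod, g ^ m⟩ := by
  induction m with
  | zero =>
    ext
    · show (1 : N ⋊[φ] G).left = _
      simp
    · show (1 : N ⋊[φ] G).right = _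
      simp
  | succ m ih =>
    rw [pow_succ, ih, List.ofFn_succ']
    ext
    · show _ * φ (g ^ m) n = _
      simp
    · show g ^ m * g = g ^ (m + 1)
      rw [pow_succ]

theorem finRotate_pow_apply (n m : ℕ) : ∀ i : Fin (n + 1),
    (finRotate (n + 1) ^ m) i = i + (m : Fin (n + 1)) := by
  induction m with
  | zero => intro i; simp
  | succ k ih =>
    intro i
    rw [pow_succ, Equiv.Perm.mul_apply, ih, finRotate_succ_apply]
    push_cast
    ring

theorem finRotate_pow_symm (n m : ℕ) (i : Fin (n + 1)) :
    (finRotate (n + 1) ^ m).symm i = i - (m : Fin (n + 1)) := by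
  rw [Equiv.symm_apply_eq, finRotate_pow_apply, sub_add_cancel]

theorem prod_shift {Q : Type*} [Group Q] (p : ℕ) (a : ℕ → Q) (hper : ∀ m, a (m + p) = a m)
    (h0 : (List.ofFn fun j : Fin p => a j).prod = 1) (m : ℕ) :
    (List.ofFn fun j : Fin p => a (m + (j : ℕ))).prod = 1 := by
  have hsplit : ∀ (s t : ℕ) (b : ℕ → Q),
      (List.ofFn fun j : Fin (s + t) => b (j : ℕ)).prod
        = (List.ofFn fun j : Fin s => b (j : ℕ)).prod
          * (List.ofFn fun j : Fin t => b (s + (j : ℕ))).prod := by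
    intro s t b
    rw [List.ofFn_add, List.prod_append]
    simp
  have h1 := hsplit m p a
  have h2 := hsplit p m a
  have hx : (List.ofFn fun j : Fin m => a (p + (j : ℕ))).prod
      = (List.ofFn fun j : Fin m => a (j : ℕ)).prod := by
    exact congrArg List.prod (congrArg List.ofFn (funext fun j => by rw [Nat.add_comm, hper]))
  rw [Nat.add_comm m p] at h1
  rw [h1, hx, h0, one_mul] at h2
  exact mul_eq_left.mp h2

theorem card_ne {α : Type*} [Finite α] (a : α) :
    Nat.card {x : α // x ≠ a} = Nat.card α - 1 := by
  haveI := Fintype.ofFinite α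
  classical
  rw [Nat.card_eq_fintype_card, Nat.card_eq_fintype_card]
  have h := Fintype.card_subtype_compl (· = a) (α := α)
  rw [Fintype.card_subtype_eq] at h
  convert h using 2

theorem card_and_ne {α : Type*} [Finite α] (P : α → Prop) (a : α) (ha : P a) :
    Nat.card {x : α // P x ∧ x ≠ a} = Nat.card {x : α // P x} - 1 := by
  have e : {x : α // P x ∧ x ≠ a} ≃ {y : {x : α // P x} // y ≠ ⟨a, ha⟩} :=
    { toFun := fun x => ⟨⟨x.1, x.2.1⟩, fun h => x.2.2 (congrArg Subtype.val h)⟩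
      invFun := fun y => ⟨y.1.1, y.1.2, fun h => y.2 (Subtype.ext h)⟩
      left_inv := fun x => rfl
      right_inv := fun y => rfl }
  rw [Nat.card_congr e, card_ne]

theorem card_prod_one {Q : Type*} [Group Q] [Finite Q] (n : ℕ) :
    Nat.card {g : Fin (n + 1) → Q // (List.ofFn g).prod = 1} = Nat.card Q ^ n := by
  have e : {g : Fin (n + 1) → Q // (List.ofFn g).prod = 1} ≃ (Fin n → Q) :=
    { toFun := fun g => Fin.init g.1
      invFun := fun h => ⟨Fin.snoc h ((List.ofFn h).prod)⁻¹, by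
        rw [List.ofFn_succ', List.prod_concat]
        simp⟩
      left_inv := fun g => by
        apply Subtype.ext
        have hg := g.2
        rw [List.ofFn_succ', List.prod_concat] at hg
        have hlast : ((List.ofFn fun i : Fin n => g.1 i.castSucc).prod)⁻¹ = g.1 (Fin.last n) :=
          inv_eq_of_mul_eq_one_right hg
        show Fin.snoc (Fin.init g.1) ((List.ofFn fun i : Fin n => g.1 i.castSucc).prod)⁻¹ = g.1
        rw [hlast, Fin.snoc_init_self]
      right_inv := fun h => Fin.init_snoc _ _ }
  rw [Nat.card_congr e, Nat.card_fun]
  simp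


theorem zmodHom_apply {G : Type*} [Group G] (n : ℕ) (g : G) (h : g ^ n = 1) (m : ℕ) :
    zmodHom n g h (Multiplicative.ofAdd ((m : ZMod n))) = g ^ m := by
  rw [show ((m : ZMod n)) = ((m : ℤ) : ZMod n) by push_cast; ring]
  simp only [zmodHom, AddMonoidHom.toMultiplicativeLeft_apply_apply, toAdd_ofAdd, ZMod.lift_coe]
  simp [zmultiplesHom]

theorem rotHom_apply {Q : Type*} [Group Q] (p m : ℕ) (f : Fin p → Q) :
    rotHom p Q (Multiplicative.ofAdd ((m : ZMod p))) f = f ∘ (finRotate p ^ m).symm := by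
  rw [rotHom, zmodHom_apply, ← map_pow]
  rfl


theorem wreath_mk_pow {Q : Type*} [Group Q] (n : ℕ) (f : Fin (n+1) → Q) (k : ZMod (n+1)) :
    ((⟨f, Multiplicative.ofAdd k⟩ :
        (Fin (n+1) → Q) ⋊[rotHom (n+1) Q] Multiplicative (ZMod (n+1))) ^ (n+1) = 1)
      ↔ ∀ i : Fin (n+1),
        (List.ofFn fun j : Fin (n+1) =>
          f (i - (((j : ℕ) * k.val : ℕ) : Fin (n+1)))).prod = 1 := by
  have hofAdd : ∀ j : ℕ, (Multiplicative.ofAdd k) ^ j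
      = Multiplicative.ofAdd (((j * k.val : ℕ)) : ZMod (n+1)) := by
    intro j
    rw [← ofAdd_nsmul]
    congr 1
    rw [nsmul_eq_mul, Nat.cast_mul, ZMod.natCast_val, ZMod.cast_id]
  rw [sd_pow]
  have hentries : (fun j : Fin (n+1) => rotHom (n+1) Q ((Multiplicative.ofAdd k) ^ (j : ℕ)) f)
      = fun j : Fin (n+1) => fun i => f (i - (((j : ℕ) * k.val : ℕ) : Fin (n+1))) := by
    funext j
    rw [hofAdd, rotHom_apply]
    funext i
    show f ((finRotate (n+1) ^ ((j : ℕ) * k.val)).symm i) = _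
    rw [finRotate_pow_symm]
  rw [hentries, hofAdd]
  have hright : Multiplicative.ofAdd ((((n+1) * k.val : ℕ)) : ZMod (n+1)) = 1 := by
    rw [Nat.cast_mul, ZMod.natCast_self, zero_mul]
    rfl
  rw [hright]
  have happ : ∀ i : Fin (n+1),
      (List.ofFn fun j : Fin (n+1) =>
        fun i' => f (i' - (((j : ℕ) * k.val : ℕ) : Fin (n+1)))).prod i
      = (List.ofFn fun j : Fin (n+1) =>
          f (i - (((j : ℕ) * k.val : ℕ) : Fin (n+1)))).prod := by
    intro i
    have h1 := map_list_prod (Pi.evalMonoidHom (fun _ : Fin (n+1) => Q) i)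
      (List.ofFn fun j : Fin (n+1) =>
        fun i' => f (i' - (((j : ℕ) * k.val : ℕ) : Fin (n+1))))
    rw [List.map_ofFn] at h1
    exact h1
  constructor
  · intro h i
    have hleft : (List.ofFn fun j : Fin (n+1) =>
        fun i' => f (i' - (((j : ℕ) * k.val : ℕ) : Fin (n+1)))).prod = 1 := by
      simpa using congrArg SemidirectProduct.left h
    rw [← happ i, hleft]
    rfl
  · intro h
    apply SemidirectProduct.ext
    · show (List.ofFn fun j : Fin (n+1) =>
        fun i' => f (i' - (((j : ℕ) * k.val : ℕ) : Fin (n+1)))).prod = 1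
      funext i
      rw [happ i, h i]
      rfl
    · rfl

theorem card_fiber_ne {Q : Type*} [Group Q] [Finite Q] (n : ℕ) (hp : (n+1).Prime)
    (k : ZMod (n+1)) (hk : k ≠ 0) :
    Nat.card {f : Fin (n+1) → Q //
      (⟨f, Multiplicative.ofAdd k⟩ :
        (Fin (n+1) → Q) ⋊[rotHom (n+1) Q] Multiplicative (ZMod (n+1))) ^ (n+1) = 1}
      = Nat.card Q ^ n := by
  haveI := Fact.mk hp
  -- index arithmetic helpers
  have hidx : ∀ m : ℕ, (((m + (n+1)) * k.val : ℕ) : Fin (n+1)) = ((m * k.val : ℕ) : Fin (n+1)) := by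
    intro m
    rw [Nat.add_mul, Nat.cast_add, Nat.cast_mul (n+1) k.val, Fin.natCast_self, zero_mul, add_zero]
  -- step 1 : reduce to the single condition at index 0
  have e1 : {f : Fin (n+1) → Q //
      (⟨f, Multiplicative.ofAdd k⟩ :
        (Fin (n+1) → Q) ⋊[rotHom (n+1) Q] Multiplicative (ZMod (n+1))) ^ (n+1) = 1}
      ≃ {f : Fin (n+1) → Q //
        (List.ofFn fun j : Fin (n+1) =>
          f ((0 : Fin (n+1)) - (((j : ℕ) * k.val : ℕ) : Fin (n+1)))).prod = 1} := by
    apply Equiv.subtypeEquivRight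
    intro f
    rw [wreath_mk_pow]
    constructor
    · intro h; exact h 0
    · intro h0 i
      set a : ℕ → Q := fun m => f ((0 : Fin (n+1)) - ((m * k.val : ℕ) : Fin (n+1))) with ha
      have hper : ∀ m, a (m + (n+1)) = a m := by
        intro m
        show f _ = f _
        rw [hidx m]
      set z : ZMod (n+1) := -(show ZMod (n+1) from i) * k⁻¹ with hz
      have hm0 : ((z.val * k.val : ℕ) : Fin (n+1)) = -i := by
        show ((z.val * k.val : ℕ) : ZMod (n+1)) = -(show ZMod (n+1) from i)
        rw [Nat.cast_mul, ZMod.natCast_val, ZMod.cast_id, ZMod.natCast_val, ZMod.cast_id, hz,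
          inv_mul_cancel_right₀ hk]
      have hi : i = (0 : Fin (n+1)) - ((z.val * k.val : ℕ) : Fin (n+1)) := by
        rw [hm0, zero_sub, neg_neg]
      have hmain := prod_shift (n+1) a hper h0 z.val
      have hind : (fun j : Fin (n+1) => f (i - (((j : ℕ) * k.val : ℕ) : Fin (n+1))))
          = fun j : Fin (n+1) => a (z.val + (j : ℕ)) := by
        funext j
        show f _ = f _
        congr 1
        rw [hi, Nat.add_mul, Nat.cast_add]
        ring
      rw [hind]
      exact hmain
  -- step 2 : reindexing by the bijection j ↦ -(j k)
  have hE : ∀ j : Fin (n+1), (0 : Fin (n+1)) - (((j : ℕ) * k.val : ℕ) : Fin (n+1))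
      = (show Fin (n+1) from -((show ZMod (n+1) from j) * k)) := by
    intro j
    show (0 : ZMod (n+1)) - ((ZMod.val (show ZMod (n+1) from j) * ZMod.val k : ℕ) : ZMod (n+1))
        = -((show ZMod (n+1) from j) * k)
    rw [Nat.cast_mul, ZMod.natCast_val, ZMod.cast_id, ZMod.natCast_val, ZMod.cast_id, zero_sub]
  have hinj : Function.Injective
      (fun j : Fin (n+1) => (0 : Fin (n+1)) - (((j : ℕ) * k.val : ℕ) : Fin (n+1))) := by
    intro j1 j2 h
    simp only [hE] at h
    have h' : -((show ZMod (n+1) from j1) * k) = -((show ZMod (n+1) from j2) * k) := h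
    have h'' : (show ZMod (n+1) from j1) = (show ZMod (n+1) from j2) := mul_right_cancel₀ hk (neg_inj.mp h')
    exact h''
  let E : Fin (n+1) ≃ Fin (n+1) :=
    Equiv.ofBijective _ ((Finite.injective_iff_bijective).mp hinj)
  have hEa : ∀ j : Fin (n+1), E j = (0 : Fin (n+1)) - (((j : ℕ) * k.val : ℕ) : Fin (n+1)) :=
    fun j => rfl
  have e2 : {f : Fin (n+1) → Q //
      (List.ofFn fun j : Fin (n+1) =>
        f ((0 : Fin (n+1)) - (((j : ℕ) * k.val : ℕ) : Fin (n+1)))).prod = 1}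
      ≃ {g : Fin (n+1) → Q // (List.ofFn g).prod = 1} :=
    { toFun := fun f => ⟨f.1 ∘ E, by
        have := f.2
        rw [show (List.ofFn (f.1 ∘ E)) = List.ofFn fun j : Fin (n+1) =>
          f.1 ((0 : Fin (n+1)) - (((j : ℕ) * k.val : ℕ) : Fin (n+1))) from
          congrArg List.ofFn (funext fun j => congrArg f.1 (hEa j))]
        exact this⟩
      invFun := fun g => ⟨g.1 ∘ E.symm, by
        have := g.2
        rw [show (List.ofFn fun j : Fin (n+1) =>
            (g.1 ∘ E.symm) ((0 : Fin (n+1)) - (((j : ℕ) * k.val : ℕ) : Fin (n+1))))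
          = List.ofFn g.1 from congrArg List.ofFn (funext fun j => by
            show g.1 (E.symm _) = g.1 j
            rw [← hEa j, Equiv.symm_apply_apply])]
        exact this⟩
      left_inv := fun f => by
        apply Subtype.ext
        funext x
        show f.1 (E (E.symm x)) = f.1 x
        rw [Equiv.apply_symm_apply]
      right_inv := fun g => by
        apply Subtype.ext
        funext x
        show g.1 (E.symm (E x)) = g.1 x
        rw [Equiv.symm_apply_apply] }
  rw [Nat.card_congr (e1.trans e2), card_prod_one]

theorem card_pow_eq_one {Q : Type*} [Group Q] [Finite Q] (n : ℕ) (hp : (n+1).Prime) :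
    Nat.card {q : Q // q ^ (n+1) = 1} = Nat.card {q : Q // orderOf q = (n+1)} + 1 := by
  haveI := Fact.mk hp
  have h1 : Nat.card {q : Q // orderOf q = (n+1)}
      = Nat.card {q : Q // q ^ (n+1) = 1} - 1 := by
    rw [← card_and_ne (fun q : Q => q ^ (n+1) = 1) 1 (one_pow _)]
    apply Nat.card_congr
    apply Equiv.subtypeEquivRight
    intro q
    constructor
    · intro h
      refine ⟨h ▸ pow_orderOf_eq_one q, fun h1 => ?_⟩
      rw [h1, orderOf_one] at h
      have := hp.one_lt
      omega
    · rintro ⟨hq, hne⟩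
      exact orderOf_eq_prime hq hne
  have hpos : 0 < Nat.card {q : Q // q ^ (n+1) = 1} :=
    @Nat.card_pos _ ⟨⟨1, one_pow _⟩⟩ _
  omega

theorem card_fiber_zero {Q : Type*} [Group Q] [Finite Q] (n : ℕ) (hp : (n+1).Prime) :
    Nat.card {f : Fin (n+1) → Q //
      (⟨f, Multiplicative.ofAdd (0 : ZMod (n+1))⟩ :
        (Fin (n+1) → Q) ⋊[rotHom (n+1) Q] Multiplicative (ZMod (n+1))) ^ (n+1) = 1 ∧
      (⟨f, Multiplicative.ofAdd (0 : ZMod (n+1))⟩ :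
        (Fin (n+1) → Q) ⋊[rotHom (n+1) Q] Multiplicative (ZMod (n+1))) ≠ 1}
      = (Nat.card {q : Q // orderOf q = (n+1)} + 1) ^ (n+1) - 1 := by
  have hin : ∀ f : Fin (n+1) → Q,
      (⟨f, Multiplicative.ofAdd (0 : ZMod (n+1))⟩ :
        (Fin (n+1) → Q) ⋊[rotHom (n+1) Q] Multiplicative (ZMod (n+1)))
      = SemidirectProduct.inl f := fun f => rfl
  have e : {f : Fin (n+1) → Q //
      (⟨f, Multiplicative.ofAdd (0 : ZMod (n+1))⟩ :
        (Fin (n+1) → Q) ⋊[rotHom (n+1) Q] Multiplicative (ZMod (n+1))) ^ (n+1) = 1 ∧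
      (⟨f, Multiplicative.ofAdd (0 : ZMod (n+1))⟩ :
        (Fin (n+1) → Q) ⋊[rotHom (n+1) Q] Multiplicative (ZMod (n+1))) ≠ 1}
      ≃ {f : Fin (n+1) → Q // f ^ (n+1) = 1 ∧ f ≠ 1} := by
    apply Equiv.subtypeEquivRight
    intro f
    rw [hin f, ← map_pow]
    exact and_congr (map_eq_one_iff _ SemidirectProduct.inl_injective)
      (not_congr (map_eq_one_iff _ SemidirectProduct.inl_injective))
  rw [Nat.card_congr e, card_and_ne (fun f : Fin (n+1) → Q => f ^ (n+1) = 1) 1 (one_pow _)]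
  have e2 : {f : Fin (n+1) → Q // f ^ (n+1) = 1} ≃ (Fin (n+1) → {q : Q // q ^ (n+1) = 1}) := by
    refine (Equiv.subtypeEquivRight ?_).trans (Equiv.subtypePiEquivPi)
    intro f
    rw [funext_iff]
    apply forall_congr'
    intro i
    rw [Pi.pow_apply, Pi.one_apply]
  rw [Nat.card_congr e2, Nat.card_fun, card_pow_eq_one n hp]
  simp

/-- The number of elements of order `p` in the wreath product `Q ≀ ℤ/p` (`p` prime, `Q`
finite) is `(d+1)^p − 1 + (p−1)·|Q|^{p−1}`, where `d` is the number of elements of order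
`p` in `Q`. -/
theorem card_orderp_wreath (p : ℕ) (hp : p.Prime) (Q : Type*) [Group Q] [Finite Q] :
    Nat.card {w : WreathCyc p Q // orderOf w = p} =
      (Nat.card {q : Q // orderOf q = p} + 1) ^ p - 1 +
        (p - 1) * Nat.card Q ^ (p - 1) := by
  obtain ⟨n, rfl⟩ := Nat.exists_eq_succ_of_ne_zero hp.ne_zero
  simp only [Nat.succ_eq_add_one] at hp ⊢
  haveI := Fact.mk hp
  classical
  set P : ZMod (n+1) → (Fin (n+1) → Q) → Prop := fun k f =>
    (⟨f, Multiplicative.ofAdd k⟩ :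
      (Fin (n+1) → Q) ⋊[rotHom (n+1) Q] Multiplicative (ZMod (n+1))) ^ (n+1) = 1 ∧
    (⟨f, Multiplicative.ofAdd k⟩ :
      (Fin (n+1) → Q) ⋊[rotHom (n+1) Q] Multiplicative (ZMod (n+1))) ≠ 1 with hP
  have e1 : {w : ((Fin (n+1) → Q) ⋊[rotHom (n+1) Q] Multiplicative (ZMod (n+1))) //
      orderOf w = (n+1)} ≃
      {w : ((Fin (n+1) → Q) ⋊[rotHom (n+1) Q] Multiplicative (ZMod (n+1))) //
        w ^ (n+1) = 1 ∧ w ≠ 1} := by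
    apply Equiv.subtypeEquivRight
    intro w
    constructor
    · intro h
      refine ⟨by have := pow_orderOf_eq_one w; rwa [h] at this, fun h1 => ?_⟩
      rw [h1, orderOf_one] at h
      have := hp.one_lt
      omega
    · rintro ⟨h1, h2⟩
      exact orderOf_eq_prime h1 h2
  have e2 : {w : ((Fin (n+1) → Q) ⋊[rotHom (n+1) Q] Multiplicative (ZMod (n+1))) //
      w ^ (n+1) = 1 ∧ w ≠ 1} ≃
      {x : ZMod (n+1) × (Fin (n+1) → Q) // P x.1 x.2} :=
    { toFun := fun w => ⟨(Multiplicative.toAdd w.1.right, w.1.left), w.2⟩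
      invFun := fun x => ⟨⟨x.1.2, Multiplicative.ofAdd x.1.1⟩, x.2⟩
      left_inv := fun w => rfl
      right_inv := fun x => rfl }
  have e3 := Equiv.subtypeProdEquivSigmaSubtype P
  have hcardeq : Nat.card {w : WreathCyc (n+1) Q // orderOf w = (n+1)}
      = Nat.card ((k : ZMod (n+1)) × {f : Fin (n+1) → Q // P k f}) :=
    Nat.card_congr (e1.trans (e2.trans e3))
  rw [hcardeq]
  haveI : ∀ k : ZMod (n+1), Fintype {f : Fin (n+1) → Q // P k f} :=
    fun k => Fintype.ofFinite _
  rw [Nat.card_eq_fintype_card, Fintype.card_sigma]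
  simp only [← Nat.card_eq_fintype_card]
  rw [← Finset.sum_erase_add Finset.univ _ (Finset.mem_univ (0 : ZMod (n+1)))]
  have hzero : Nat.card {f : Fin (n+1) → Q // P 0 f}
      = (Nat.card {q : Q // orderOf q = (n+1)} + 1) ^ (n+1) - 1 := card_fiber_zero n hp
  have hne : ∀ k ∈ Finset.univ.erase (0 : ZMod (n+1)),
      Nat.card {f : Fin (n+1) → Q // P k f} = Nat.card Q ^ n := by
    intro k hk
    have hk0 : k ≠ 0 := (Finset.mem_erase.mp hk).1
    have e4 : {f : Fin (n+1) → Q // P k f} ≃ {f : Fin (n+1) → Q //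
        (⟨f, Multiplicative.ofAdd k⟩ :
          (Fin (n+1) → Q) ⋊[rotHom (n+1) Q] Multiplicative (ZMod (n+1))) ^ (n+1) = 1} := by
      apply Equiv.subtypeEquivRight
      intro f
      rw [hP]
      simp only
      refine and_iff_left ?_
      intro h
      have := congrArg SemidirectProduct.right h
      simp only [SemidirectProduct.one_right] at this
      exact hk0 (by simpa using congrArg Multiplicative.toAdd this)
    rw [Nat.card_congr e4, card_fiber_ne n hp k hk0]
  rw [Finset.sum_congr rfl hne, Finset.sum_const, Finset.card_erase_of_mem (Finset.mem_univ _),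
    Finset.card_univ, ZMod.card, hzero, smul_eq_mul]
  rw [Nat.add_sub_cancel]
  exact Nat.add_comm _ _
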